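/- Let y ∈ ℝⁿ, t > 0, ε ∈ (0,1), and suppose ‖y − p/q‖_∞ ≤ ε/e^t for some (p,q) ∈ ℤⁿ × ℤ with 0 < q < e^t. Let g = diag(φ ε^{-1}, …, φ ε^{-1}, φ e^{-t}) ∈ SL_{n+1}(ℝ) with φ = (εⁿ e^t)^{1/(n+1)}, and let U(y) be the (n+1)×(n+1) unipotent matrix equal to the identity except its last column, whose first n entries are (y_n, …, y_1) (i.e., y reversed) and last entry 1. Then ‖g · U(y) · (−p σ_n, q)ᵀ‖_∞ ≤ φ, where σ_n is the n×n anti-diagonal permutation matrix (so −p σ_n reverses and negates p). -/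
import Mathlib


open Matrix in
/-- Lemma 4.1 of Beresnevich–Yang with `Θ = 0`: if `‖y - p/q‖_∞ ≤ ε/e^t` with
`0 < q < e^t`, then `‖g_{ε,t} U(y) (-pσ_n, q)ᵀ‖_∞ ≤ φ` where
`φ = (ε^n e^t)^{1/(n+1)}`, `g_{ε,t} = diag(φ/ε,…,φ/ε,φe^{-t})` and `U(y)` is the
unipotent matrix with last column `(y_n,…,y_1,1)ᵀ`. -/
theorem stmt_10 (n : ℕ) (hn : 1 ≤ n) (y : Fin n → ℝ) (p : Fin n → ℤ) (q : ℤ)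
    (ε t : ℝ) (hε0 : 0 < ε) (hε1 : ε < 1) (ht : 0 < t)
    (hq0 : 0 < q) (hq1 : (q : ℝ) < Real.exp t)
    (happrox : ∀ i : Fin n, |y i - (p i : ℝ) / (q : ℝ)| ≤ ε / Real.exp t) :
    ∀ i : Fin (n + 1),
      |(Matrix.mulVec
          (Matrix.diagonal (fun i : Fin (n + 1) =>
            if (i : ℕ) < n then (ε ^ n * Real.exp t) ^ ((1 : ℝ) / (n + 1)) / ε
            else (ε ^ n * Real.exp t) ^ ((1 : ℝ) / (n + 1)) * Real.exp (-t)))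
          (Matrix.mulVec
            (fun i j : Fin (n + 1) =>
              if i = j then 1
              else if h : (i : ℕ) < n ∧ (j : ℕ) = n then
                y ⟨n - 1 - (i : ℕ), by omega⟩
              else 0)
            (fun i : Fin (n + 1) =>
              if h : (i : ℕ) < n then -(p ⟨n - 1 - (i : ℕ), by omega⟩ : ℝ)
              else (q : ℝ)))) i|
        ≤ (ε ^ n * Real.exp t) ^ ((1 : ℝ) / (n + 1)) := by
  have hφ : (0:ℝ) < (ε ^ n * Real.exp t) ^ ((1 : ℝ) / (n + 1)) :=
    Real.rpow_pos_of_pos (by positivity) _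
  have hqR : (0:ℝ) < (q:ℝ) := by exact_mod_cast hq0
  intro i
  rw [Matrix.mulVec_diagonal]
  simp only [Matrix.mulVec, dotProduct]
  by_cases hi : (i:ℕ) < n
  · rw [if_pos hi]
    have hne : i ≠ Fin.last n := by
      intro h; rw [h] at hi; simp at hi
    have hsum : (∑ j, (if i = j then 1
              else if h : (i : ℕ) < n ∧ (j : ℕ) = n then
                y ⟨n - 1 - (i : ℕ), by omega⟩
              else 0) *
            (if h : (j:ℕ) < n then -(p ⟨n - 1 - (j : ℕ), by omega⟩ : ℝ) else (q : ℝ)))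
        = -(p ⟨n - 1 - (i : ℕ), by omega⟩ : ℝ) + y ⟨n - 1 - (i:ℕ), by omega⟩ * q := by
      rw [← Finset.sum_subset (Finset.subset_univ {i, Fin.last n})]
      · rw [Finset.sum_pair hne]
        rw [if_pos rfl, one_mul, dif_pos hi]
        have h1 : i = Fin.last n ↔ False := by simp [hne]
        rw [if_neg hne, dif_pos ⟨hi, Fin.val_last n⟩]
        have h2 : ¬ ((Fin.last n : ℕ) < n) := by simp
        rw [dif_neg h2]
      · intro j _ hj
        simp only [Finset.mem_insert, Finset.mem_singleton, not_or] at hj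
        obtain ⟨hj1, hj2⟩ := hj
        have hjn : ¬ ((j:ℕ) = n) := by
          intro h; exact hj2 (Fin.ext (by simp [h]))
        rw [if_neg (fun h => hj1 h.symm), dif_neg (by tauto), zero_mul]
    rw [hsum]
    have key : |(-(p ⟨n - 1 - (i : ℕ), by omega⟩ : ℝ) + y ⟨n - 1 - (i:ℕ), by omega⟩ * q)| ≤ ε := by
      have := happrox ⟨n - 1 - (i:ℕ), by omega⟩
      have heq : (-(p ⟨n - 1 - (i : ℕ), by omega⟩ : ℝ) + y ⟨n - 1 - (i:ℕ), by omega⟩ * q)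
          = (q:ℝ) * (y ⟨n - 1 - (i:ℕ), by omega⟩ - (p ⟨n - 1 - (i:ℕ), by omega⟩ : ℝ) / q) := by
        field_simp; ring
      rw [heq, abs_mul, abs_of_pos hqR]
      calc (q:ℝ) * |y ⟨n - 1 - (i:ℕ), by omega⟩ - (p ⟨n - 1 - (i:ℕ), by omega⟩ : ℝ) / q|
          ≤ (q:ℝ) * (ε / Real.exp t) := by
            exact mul_le_mul_of_nonneg_left this hqR.le
        _ ≤ Real.exp t * (ε / Real.exp t) := by
            exact mul_le_mul_of_nonneg_right hq1.le (by positivity)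
        _ = ε := by field_simp
    rw [abs_mul, abs_of_pos (by positivity : (0:ℝ) < (ε ^ n * Real.exp t) ^ ((1 : ℝ) / (n + 1)) / ε)]
    calc (ε ^ n * Real.exp t) ^ ((1 : ℝ) / (n + 1)) / ε * |_| ≤
        (ε ^ n * Real.exp t) ^ ((1 : ℝ) / (n + 1)) / ε * ε := by
          exact mul_le_mul_of_nonneg_left key (by positivity)
      _ = (ε ^ n * Real.exp t) ^ ((1 : ℝ) / (n + 1)) := by field_simp
  · rw [if_neg hi]
    have hsum : (∑ j, (if i = j then 1
              else if h : (i : ℕ) < n ∧ (j : ℕ) = n then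
                y ⟨n - 1 - (i : ℕ), by omega⟩
              else 0) *
            (if h : (j:ℕ) < n then -(p ⟨n - 1 - (j : ℕ), by omega⟩ : ℝ) else (q : ℝ)))
        = (q:ℝ) := by
      rw [Finset.sum_eq_single i]
      · rw [if_pos rfl, one_mul, dif_neg hi]
      · intro j _ hj
        rw [if_neg (fun h => hj h.symm), dif_neg (by tauto), zero_mul]
      · intro h; exact absurd (Finset.mem_univ i) h
    rw [hsum, abs_mul, abs_mul, abs_of_pos hφ, abs_of_pos (Real.exp_pos _),
      abs_of_pos hqR, mul_assoc]
    nth_rewrite 2 [← mul_one ((ε ^ n * Real.exp t) ^ ((1 : ℝ) / (n + 1)))]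
    apply mul_le_mul_of_nonneg_left _ hφ.le
    rw [Real.exp_neg]
    rw [inv_mul_le_iff₀ (Real.exp_pos t), mul_one]
    exact hq1.le
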